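/- Fix natural numbers m ≤ n, a ≤ n, and u > 0. Define an equivalence relation on the set D_{m,n} of m-element subsets of {1,...,n} (identified with strictly increasing functions f : {1,...,m} → {1,...,n}) by f₁ ≡ f₂ iff f₁ ∩ {1,...,n-a} = f₂ ∩ {1,...,n-a} and f₁(j) ≡ f₂(j) (mod u) for all j ∈ {1,...,m}. Then every equivalence class δ that contains some subset not contained in {1,...,n-a} has cardinality |δ| = C(⌊a/u⌋ - s + b, b) for some integers b, s with 0 < b ≤ m and 0 ≤ s ≤ b. -/

import Mathlib

/-- `D_{m,n}`: the `m`-element subsets of `{1,...,n}`. -/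
def Dmn (m n : ℕ) : Finset (Finset ℕ) := (Finset.Icc 1 n).powersetCard m

/-- The equivalence relation `≡ᵘₐ`: `f₁ ≡ f₂` iff they have the same intersection with
`{1,...,n-a}` and their `j`-th elements (in increasing order) are congruent mod `u`. -/
def EqvRel (n a u : ℕ) (f₁ f₂ : Finset ℕ) : Prop :=
  f₁ ∩ Finset.Icc 1 (n - a) = f₂ ∩ Finset.Icc 1 (n - a) ∧
  List.Forall₂ (fun x y => x ≡ y [MOD u]) (f₁.sort (· ≤ ·)) (f₂.sort (· ≤ ·))

open Finset List
/-- sort of a union with all elements of the first below the second -/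
lemma sort_union_of_lt (A B : Finset ℕ) (h : ∀ x ∈ A, ∀ y ∈ B, x < y) :
    (A ∪ B).sort (· ≤ ·) = A.sort (· ≤ ·) ++ B.sort (· ≤ ·) := by
  have hd : Disjoint A B := by
    rw [Finset.disjoint_left]
    intro x hx hxB
    exact absurd rfl (h x hx x hxB).ne
  have hperm : ((A ∪ B).sort (· ≤ ·)).Perm (A.sort (· ≤ ·) ++ B.sort (· ≤ ·)) := by
    rw [← Multiset.coe_eq_coe, Finset.sort_eq, ← Finset.disjUnion_eq_union A B hd]
    show (Finset.disjUnion A B hd).val = _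
    simp [Finset.disjUnion, ← Multiset.coe_add, Finset.sort_eq]
  refine List.Perm.eq_of_pairwise' (Finset.pairwise_sort _ _) ?_ hperm
  rw [List.pairwise_append]
  refine ⟨Finset.pairwise_sort _ _, Finset.pairwise_sort _ _, ?_⟩
  intro x hx y hy
  exact (h x (by simpa using hx) y (by simpa using hy)).le


def casc (ρ : ℕ → ℕ) : ℕ → ℕ
  | 0 => 0
  | i+1 => casc ρ i + (if ρ i < ρ (i+1) then 1 else 0)

section helpers
lemma casc_succ (ρ : ℕ → ℕ) (i : ℕ) :
    casc ρ (i+1) = casc ρ i + (if ρ i < ρ (i+1) then 1 else 0) := rfl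

lemma casc_le (ρ : ℕ → ℕ) (i j : ℕ) : casc ρ (i + j) ≤ casc ρ i + j := by
  induction j with
  | zero => simp
  | succ j ih => rw [← Nat.add_assoc, casc_succ]; split <;> omega

lemma casc_run (ρ : ℕ → ℕ) (i j : ℕ) (h : casc ρ (i + j) = casc ρ i + j) :
    ρ i ≤ ρ (i + j) := by
  induction j with
  | zero => simp
  | succ j ih =>
    have hle := casc_le ρ i j
    rw [← Nat.add_assoc, casc_succ] at h
    split at h
    · next hlt => rw [← Nat.add_assoc]; exact le_trans (ih (by omega)) (by omega)
    · omega

lemma casc_le_self (ρ : ℕ → ℕ) (i : ℕ) : casc ρ i ≤ i := by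
  have := casc_le ρ 0 i
  simpa [casc] using this

lemma le_get_of_sorted_lt {l : List ℕ} (h : l.Pairwise (· < ·)) :
    ∀ i (hi : i < l.length), i ≤ l.get ⟨i, hi⟩ := by
  intro i
  induction i with
  | zero => omega
  | succ i ih =>
    intro hi
    have h1 : l.get ⟨i, by omega⟩ < l.get ⟨i+1, hi⟩ :=
      List.SortedLT.strictMono_get (List.Pairwise.sortedLT h) (show (⟨i, by omega⟩ : Fin l.length) < ⟨i+1, hi⟩ by
        simp [Fin.lt_def])
    have := ih (by omega)
    omega

lemma nat_block_lt {u k1 k2 r1 r2 : ℕ} (h1 : r1 < u) (h2 : r2 < u) :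
    u*k1+r1 < u*k2+r2 ↔ (k1 < k2 ∨ (k1 = k2 ∧ r1 < r2)) := by
  constructor
  · intro h
    rcases lt_trichotomy k1 k2 with h' | h' | h'
    · exact Or.inl h'
    · subst h'; right; exact ⟨rfl, by omega⟩
    · exfalso
      have : u * (k2 + 1) ≤ u * k1 := Nat.mul_le_mul_left u h'
      rw [Nat.mul_add, Nat.mul_one] at this
      omega
  · rintro (h | ⟨rfl, h⟩)
    · have : u * (k1 + 1) ≤ u * k2 := Nat.mul_le_mul_left u h
      rw [Nat.mul_add, Nat.mul_one] at this
      omega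
    · omega

lemma chain_add_le {f : ℕ → ℕ} {n : ℕ} (h : ∀ i, i + 1 ≤ n → f i < f (i+1)) :
    ∀ i j, i ≤ j → j ≤ n → f i + (j - i) ≤ f j := by
  intro i j
  induction j with
  | zero =>
    intro h1 _
    have hi0 : i = 0 := by omega
    subst hi0; simp
  | succ j ih =>
    intro h1 h2
    rcases Nat.eq_or_lt_of_le h1 with rfl | h1'
    · omega
    · have := ih (by omega) (by omega)
      have := h j (by omega)
      omega

lemma sorted_lt_map_range {b : ℕ} {ψ : ℕ → ℕ} (hmono : ∀ i j, i < j → j < b → ψ i < ψ j) :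
    ((List.range b).map ψ).Pairwise (· < ·) := by
  rw [List.pairwise_iff_get]
  intro i j hij
  simp only [List.get_eq_getElem, List.getElem_map, List.getElem_range]
  have hj : (j : ℕ) < b := by
    have hj' := j.isLt
    simp only [List.length_map, List.length_range] at hj'
    exact hj'
  exact hmono i j hij hj

lemma getD_map_range {b i : ℕ} (h : i < b) (ψ : ℕ → ℕ) :
    ((List.range b).map ψ).getD i 0 = ψ i := by
  rw [List.getD_eq_getElem _ _ (by simpa using h)]
  simp

lemma sort_of_map_range {b : ℕ} {ψ : ℕ → ℕ} (hmono : ∀ i j, i < j → j < b → ψ i < ψ j) :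
    ((List.range b).map ψ).toFinset.sort (· ≤ ·) = (List.range b).map ψ := by
  have hs := sorted_lt_map_range hmono
  exact (List.toFinset_sort _ (hs.nodup)).mpr (hs.imp le_of_lt)

lemma card_toFinset_map_range {b : ℕ} {ψ : ℕ → ℕ} (hmono : ∀ i j, i < j → j < b → ψ i < ψ j) :
    ((List.range b).map ψ).toFinset.card = b := by
  have hs := sorted_lt_map_range hmono
  rw [List.toFinset_card_of_nodup hs.nodup]
  simp
end helpers

lemma stepB (T a u : ℕ) (hu : 0 < u) (g : List ℕ)
    (hgs : g.Pairwise (· < ·)) (hne : g ≠ [])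
    (hmem : ∀ x ∈ g, T + 1 ≤ x ∧ x ≤ T + a)
    (inst : DecidablePred fun H : Finset ℕ => List.Forall₂ (Nat.ModEq u) (H.sort (· ≤ ·)) g) :
    (@Finset.filter _ (fun H => List.Forall₂ (Nat.ModEq u) (H.sort (· ≤ ·)) g) inst
        ((Finset.Icc (T+1) (T+a)).powersetCard g.length)).card
      = Nat.choose ((a - 1 - (g.getD (g.length - 1) 0 - (T+1)) % u) / u
          + casc (fun i => (g.getD i 0 - (T+1)) % u) (g.length - 1) + 1) g.length := by
  classical
  set b := g.length with hbdef
  set ρ : ℕ → ℕ := fun i => (g.getD i 0 - (T+1)) % u with hρdef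
  set c : ℕ → ℕ := casc ρ with hcdef
  set l : ℕ := b - 1 with hldef
  set q : ℕ := (a - 1 - ρ l) / u with hqdef
  set K : ℕ := q + c l + 1 with hKdef
  have hb : 0 < b := by
    simpa [hbdef] using List.length_pos_iff.mpr hne
  have hl : l < b := by omega
  have hρu : ∀ i, ρ i < u := fun i => Nat.mod_lt _ hu
  -- facts about g
  have hgmem : ∀ i, i < b → T + 1 ≤ g.getD i 0 ∧ g.getD i 0 ≤ T + a := by
    intro i hi
    rw [List.getD_eq_getElem _ _ hi]
    exact hmem _ (List.getElem_mem _)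
  have ha1 : 1 ≤ a := by
    have := hgmem l hl
    omega
  have hρa : ρ l ≤ a - 1 := by
    have h1 := hgmem l hl
    have h2 : ρ l ≤ g.getD l 0 - (T+1) := Nat.mod_le _ _
    omega
  have hqa : u * q ≤ a - 1 - ρ l := by
    rw [hqdef, Nat.mul_comm]
    exact Nat.div_mul_le_self _ _
  have hcll : c l ≤ l := casc_le_self ρ l
  -- helper for mod of subtraction
  have hsubmod : ∀ x y : ℕ, T+1 ≤ x → T+1 ≤ y → x % u = y % u →
      (x - (T+1)) % u = (y - (T+1)) % u := by
    intro x y hx hy hxy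
    have : (x - (T+1)) ≡ (y - (T+1)) [MOD u] := by
      apply Nat.ModEq.add_right_cancel' (c := T+1)
      rw [Nat.sub_add_cancel hx, Nat.sub_add_cancel hy]
      exact hxy
    exact this
  -- facts about elements of the source set
  have srcFacts : ∀ H : Finset ℕ,
      H ∈ (@Finset.filter _ (fun H => List.Forall₂ (Nat.ModEq u) (H.sort (· ≤ ·)) g) inst
        ((Finset.Icc (T+1) (T+a)).powersetCard b)) →
      (H.sort (· ≤ ·)).length = b ∧
      (∀ i, i < b → (H.sort (· ≤ ·)).getD i 0
          = (T+1) + (u * (((H.sort (· ≤ ·)).getD i 0 - (T+1))/u) + ρ i)) ∧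
      (∀ i j, i < j → j < b →
        ((H.sort (· ≤ ·)).getD i 0 - (T+1))/u + c i
          < ((H.sort (· ≤ ·)).getD j 0 - (T+1))/u + c j) ∧
      (∀ i, i < b → ((H.sort (· ≤ ·)).getD i 0 - (T+1))/u + c i < K) := by
    intro H hH
    rw [Finset.mem_filter, Finset.mem_powersetCard] at hH
    obtain ⟨⟨hsub, hcard⟩, hf2⟩ := hH
    set h : List ℕ := H.sort (· ≤ ·) with hhdef
    have hlen : h.length = b := by rw [hhdef, Finset.length_sort, hcard]
    have hsort : h.Pairwise (· < ·) := (Finset.sortedLT_sort H).pairwise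
    have hmemH : ∀ i, i < b → T + 1 ≤ h.getD i 0 ∧ h.getD i 0 ≤ T + a := by
      intro i hi
      rw [List.getD_eq_getElem _ _ (by omega)]
      have hx : h[i] ∈ H := by
        rw [hhdef] at *
        exact (Finset.mem_sort _).mp (List.getElem_mem _)
      have := hsub hx
      rw [Finset.mem_Icc] at this
      exact this
    have hmodH : ∀ i, i < b → (h.getD i 0) % u = (g.getD i 0) % u := by
      intro i hi
      rw [List.forall₂_iff_get] at hf2
      obtain ⟨hlen2, hget⟩ := hf2
      rw [List.getD_eq_getElem _ _ (by omega), List.getD_eq_getElem _ _ (by omega)]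
      exact hget i (by omega) (by omega)
    have hρH : ∀ i, i < b → (h.getD i 0 - (T+1)) % u = ρ i := by
      intro i hi
      have := hgmem i hi
      exact hsubmod _ _ (hmemH i hi).1 this.1 (hmodH i hi)
    have heqH : ∀ i, i < b → h.getD i 0
        = (T+1) + (u * ((h.getD i 0 - (T+1))/u) + ρ i) := by
      intro i hi
      have h1 := Nat.div_add_mod (h.getD i 0 - (T+1)) u
      rw [hρH i hi] at h1
      have := (hmemH i hi).1
      omega
    have hchain : ∀ i, i + 1 ≤ l →
        (h.getD i 0 - (T+1))/u + c i < (h.getD (i+1) 0 - (T+1))/u + c (i+1) := by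
      intro i hi
      have hib : i + 1 < b := by omega
      have hlt : h.getD i 0 < h.getD (i+1) 0 := by
        rw [List.getD_eq_getElem _ _ (by omega), List.getD_eq_getElem _ _ (by omega)]
        exact List.SortedLT.strictMono_get (List.Pairwise.sortedLT hsort)
          (show (⟨i, by omega⟩ : Fin h.length) < ⟨i+1, by omega⟩ by simp [Fin.lt_def])
      rw [heqH i (by omega), heqH (i+1) hib,
        Nat.add_lt_add_iff_left, nat_block_lt (hρu i) (hρu (i+1))] at hlt
      rw [hcdef, casc_succ]
      rcases hlt with h' | ⟨h1, h2⟩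
      · split <;> omega
      · split <;> omega
    have hmono : ∀ i j, i < j → j < b →
        (h.getD i 0 - (T+1))/u + c i < (h.getD j 0 - (T+1))/u + c j := by
      intro i j hij hjb
      have := chain_add_le hchain i j (le_of_lt hij) (by omega)
      omega
    refine ⟨hlen, heqH, hmono, ?_⟩
    intro i hi
    have hlast : (h.getD l 0 - (T+1))/u + c l ≤ q + c l := by
      have h1 := (hmemH l hl).2
      have h2 := heqH l hl
      have h3 : u * ((h.getD l 0 - (T+1))/u) ≤ a - 1 - ρ l := by omega
      have h4 : (h.getD l 0 - (T+1))/u ≤ q := by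
        rw [hqdef]
        exact (Nat.le_div_iff_mul_le hu).mpr (by rw [Nat.mul_comm]; exact h3)
      omega
    rcases Nat.eq_or_lt_of_le (show i ≤ l by omega) with rfl | hil
    · omega
    · have := hmono i l hil hl
      omega
  -- facts about elements of the target set
  have tgtFacts : ∀ X : Finset ℕ, X ∈ (Finset.range K).powersetCard b →
      (X.sort (· ≤ ·)).length = b ∧
      (∀ i j, i < j → j < b →
        (T+1) + (u * ((X.sort (· ≤ ·)).getD i 0 - c i) + ρ i)
          < (T+1) + (u * ((X.sort (· ≤ ·)).getD j 0 - c j) + ρ j)) ∧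
      (∀ i, i < b → T + 1 ≤ (T+1) + (u * ((X.sort (· ≤ ·)).getD i 0 - c i) + ρ i)
        ∧ (T+1) + (u * ((X.sort (· ≤ ·)).getD i 0 - c i) + ρ i) ≤ T + a) ∧
      (∀ i, i < b → ((T+1) + (u * ((X.sort (· ≤ ·)).getD i 0 - c i) + ρ i)) % u
          = (g.getD i 0) % u) ∧
      (∀ i, i < b → c i ≤ (X.sort (· ≤ ·)).getD i 0) := by
    intro X hX
    rw [Finset.mem_powersetCard] at hX
    obtain ⟨hsub, hcard⟩ := hX
    set x : List ℕ := X.sort (· ≤ ·) with hxdef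
    have hxlen : x.length = b := by rw [hxdef, Finset.length_sort, hcard]
    have hxsort : x.Pairwise (· < ·) := (Finset.sortedLT_sort X).pairwise
    have hxK : ∀ i, i < b → x.getD i 0 < K := by
      intro i hi
      rw [List.getD_eq_getElem _ _ (by omega)]
      have hx : x[i] ∈ X := by
        rw [hxdef] at *
        exact (Finset.mem_sort _).mp (List.getElem_mem _)
      have := hsub hx
      rw [Finset.mem_range] at this
      exact this
    have hxge : ∀ i, i < b → i ≤ x.getD i 0 := by
      intro i hi
      rw [List.getD_eq_getElem _ _ (by omega)]
      exact le_get_of_sorted_lt hxsort i (by omega)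
    have hxc : ∀ i, i < b → c i ≤ x.getD i 0 := by
      intro i hi
      exact le_trans (casc_le_self ρ i) (hxge i hi)
    have hφchain : ∀ i, i + 1 ≤ l →
        (T+1) + (u * (x.getD i 0 - c i) + ρ i)
          < (T+1) + (u * (x.getD (i+1) 0 - c (i+1)) + ρ (i+1)) := by
      intro i hi
      have hib : i + 1 < b := by omega
      have hlt : x.getD i 0 < x.getD (i+1) 0 := by
        rw [List.getD_eq_getElem _ _ (by omega), List.getD_eq_getElem _ _ (by omega)]
        exact List.SortedLT.strictMono_get (List.Pairwise.sortedLT hxsort)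
          (show (⟨i, by omega⟩ : Fin x.length) < ⟨i+1, by omega⟩ by simp [Fin.lt_def])
      rw [Nat.add_lt_add_iff_left, nat_block_lt (hρu i) (hρu (i+1))]
      have hci := hxc i (by omega)
      have hci1 := hxc (i+1) hib
      have hcs : c (i+1) = c i + (if ρ i < ρ (i+1) then 1 else 0) := casc_succ ρ i
      split at hcs <;> omega
    have hφmono : ∀ i j, i < j → j < b →
        (T+1) + (u * (x.getD i 0 - c i) + ρ i)
          < (T+1) + (u * (x.getD j 0 - c j) + ρ j) := by
      intro i j hij hjb
      have := chain_add_le hφchain i j (le_of_lt hij) (by omega)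
      omega
    have hφmem : ∀ i, i < b → T + 1 ≤ (T+1) + (u * (x.getD i 0 - c i) + ρ i)
        ∧ (T+1) + (u * (x.getD i 0 - c i) + ρ i) ≤ T + a := by
      intro i hi
      refine ⟨by omega, ?_⟩
      have hxl : x.getD i 0 + (l - i) ≤ x.getD l 0 := by
        have hch : ∀ j, j + 1 ≤ l → x.getD j 0 < x.getD (j+1) 0 := by
          intro j hj
          rw [List.getD_eq_getElem _ _ (by omega), List.getD_eq_getElem _ _ (by omega)]
          exact List.SortedLT.strictMono_get (List.Pairwise.sortedLT hxsort)
            (show (⟨j, by omega⟩ : Fin x.length) < ⟨j+1, by omega⟩ by simp [Fin.lt_def])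
        exact chain_add_le hch i l (by omega) (by omega)
      have hxKl : x.getD l 0 ≤ q + c l := by
        have := hxK l hl
        omega
      have hcl2 : c l ≤ c i + (l - i) := by
        have := casc_le ρ i (l - i)
        rw [show i + (l - i) = l by omega] at this
        exact this
      have hci := hxc i hi
      by_cases hD : c l = c i + (l - i)
      · have hρil : ρ i ≤ ρ l := by
          have := casc_run ρ i (l - i) (by rw [show i + (l - i) = l by omega]; exact hD)
          rwa [show i + (l - i) = l by omega] at this
        have hk : x.getD i 0 - c i ≤ q := by omega
        have : u * (x.getD i 0 - c i) ≤ u * q := Nat.mul_le_mul_left u hk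
        omega
      · have hk : x.getD i 0 - c i + 1 ≤ q := by omega
        have : u * (x.getD i 0 - c i + 1) ≤ u * q := Nat.mul_le_mul_left u hk
        rw [Nat.mul_add, Nat.mul_one] at this
        have := hρu i
        omega
    have hφmod : ∀ i, i < b → ((T+1) + (u * (x.getD i 0 - c i) + ρ i)) % u
        = (g.getD i 0) % u := by
      intro i hi
      have e1 : (T+1) + (u * (x.getD i 0 - c i) + ρ i)
          = ((T+1) + ρ i) + u * (x.getD i 0 - c i) := by omega
      have hg := hgmem i hi
      have h1 := Nat.div_add_mod (g.getD i 0 - (T+1)) u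
      have e2 : g.getD i 0 = ((T+1) + ρ i) + u * ((g.getD i 0 - (T+1))/u) := by
        show g.getD i 0 = ((T+1) + (g.getD i 0 - (T+1)) % u) + u * ((g.getD i 0 - (T+1))/u)
        generalize hA : u * ((g.getD i 0 - (T+1))/u) = A at h1 ⊢
        generalize hB : (g.getD i 0 - (T+1)) % u = B at h1 ⊢
        omega
      rw [e1, e2, Nat.add_mul_mod_self_left, Nat.add_mul_mod_self_left]
    exact ⟨hxlen, hφmono, hφmem, hφmod, hxc⟩
  rw [Finset.card_bij'
    (i := fun H _ => ((List.range b).map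
        (fun i => ((H.sort (· ≤ ·)).getD i 0 - (T+1))/u + c i)).toFinset)
    (j := fun X _ => ((List.range b).map
        (fun i => (T+1) + (u * ((X.sort (· ≤ ·)).getD i 0 - c i) + ρ i))).toFinset)
    (t := (Finset.range K).powersetCard b)
    ?hi ?hj ?left ?right]
  · rw [Finset.card_powersetCard, Finset.card_range]
  case hi =>
    intro H hH
    obtain ⟨hlen, heqH, hmono, hbound⟩ := srcFacts H hH
    rw [Finset.mem_powersetCard]
    constructor
    · intro y hy
      rw [List.mem_toFinset, List.mem_map] at hy
      obtain ⟨i, hi, rfl⟩ := hy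
      rw [List.mem_range] at hi
      exact Finset.mem_range.mpr (hbound i hi)
    · exact card_toFinset_map_range hmono
  case hj =>
    intro X hX
    obtain ⟨hxlen, hφmono, hφmem, hφmod, hxc⟩ := tgtFacts X hX
    rw [Finset.mem_filter]
    constructor
    · rw [Finset.mem_powersetCard]
      constructor
      · intro y hy
        rw [List.mem_toFinset, List.mem_map] at hy
        obtain ⟨i, hi, rfl⟩ := hy
        rw [List.mem_range] at hi
        exact Finset.mem_Icc.mpr (hφmem i hi)
      · exact card_toFinset_map_range hφmono
    · rw [sort_of_map_range hφmono, List.forall₂_iff_get]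
      constructor
      · simp [hbdef]
      · intro i h1 h2
        simp only [List.length_map, List.length_range] at h1
        show _ % u = _ % u
        rw [List.get_eq_getElem, List.get_eq_getElem, List.getElem_map, List.getElem_range]
        rw [← List.getD_eq_getElem g 0 h2]
        exact hφmod i h1
  case left =>
    intro H hH
    obtain ⟨hlen, heqH, hmono, hbound⟩ := srcFacts H hH
    have hse : (((List.range b).map
        (fun i => ((H.sort (· ≤ ·)).getD i 0 - (T+1))/u + c i)).toFinset).sort (· ≤ ·)
        = (List.range b).map (fun i => ((H.sort (· ≤ ·)).getD i 0 - (T+1))/u + c i) :=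
      sort_of_map_range hmono
    simp only [hse]
    have : (List.range b).map (fun i =>
        (T+1) + (u * (((List.range b).map
          (fun i => ((H.sort (· ≤ ·)).getD i 0 - (T+1))/u + c i)).getD i 0 - c i) + ρ i))
        = H.sort (· ≤ ·) := by
      apply List.ext_getElem
      · simp [hlen]
      · intro i h1 h2
        simp only [List.length_map, List.length_range] at h1
        rw [List.getElem_map, List.getElem_range,
          getD_map_range h1, Nat.add_sub_cancel, ← heqH i h1,
          List.getD_eq_getElem _ _ h2]
    rw [this, Finset.sort_toFinset]
  case right =>
    intro X hX
    obtain ⟨hxlen, hφmono, hφmem, hφmod, hxc⟩ := tgtFacts X hX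
    have hse : (((List.range b).map
        (fun i => (T+1) + (u * ((X.sort (· ≤ ·)).getD i 0 - c i) + ρ i))).toFinset).sort (· ≤ ·)
        = (List.range b).map
          (fun i => (T+1) + (u * ((X.sort (· ≤ ·)).getD i 0 - c i) + ρ i)) :=
      sort_of_map_range hφmono
    simp only [hse]
    have : (List.range b).map (fun i =>
        (((List.range b).map
          (fun i => (T+1) + (u * ((X.sort (· ≤ ·)).getD i 0 - c i) + ρ i))).getD i 0
            - (T+1))/u + c i)
        = X.sort (· ≤ ·) := by
      apply List.ext_getElem
      · simp [hxlen]
      · intro i h1 h2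
        simp only [List.length_map, List.length_range] at h1
        rw [List.getElem_map, List.getElem_range, getD_map_range h1,
          Nat.add_sub_cancel_left, Nat.mul_add_div hu, Nat.div_eq_of_lt (hρu i),
          Nat.add_zero, Nat.sub_add_cancel (hxc i h1), List.getD_eq_getElem _ _ h2]
    rw [this, Finset.sort_toFinset]


lemma arith_div1 (a u r : ℕ) (hu : 0 < u) (hua : u ≤ a) (hind : a % u ≤ r)
    (hru : r < u) (hra : r ≤ a - 1) : (a - 1 - r) / u = a / u - 1 := by
  have hlt : u + a % u - 1 - r < u := by omega
  have hA1 : 1 ≤ a / u := (Nat.one_le_div_iff hu).mpr hua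
  have hdam := Nat.div_add_mod a u
  have e : a - 1 - r = u * (a/u - 1) + (u + a % u - 1 - r) := by
    have h1 : u * (a/u - 1) + u = u * (a/u) := by
      rw [← Nat.mul_succ]
      congr 1
      exact Nat.succ_pred_eq_of_pos hA1
    omega
  rw [e, Nat.mul_add_div hu, Nat.div_eq_of_lt hlt, Nat.add_zero]

lemma arith_div2 (a u r : ℕ) (hu : 0 < u) (hind : ¬ a % u ≤ r)
    (hru : r < u) (hra : r ≤ a - 1) : (a - 1 - r) / u = a / u := by
  have hlt : a % u - 1 - r < u := by
    have := Nat.mod_lt a hu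
    omega
  have hdam := Nat.div_add_mod a u
  have e : a - 1 - r = u * (a/u) + (a % u - 1 - r) := by omega
  rw [e, Nat.mul_add_div hu, Nat.div_eq_of_lt hlt, Nat.add_zero]

lemma arith_fin1 (A k b : ℕ) (hA : 1 ≤ A) (hk : k ≤ b - 1) (hb : 1 ≤ b) :
    A - 1 + k + 1 = A + b - (b - 1 - k + 1) := by omega

lemma arith_fin2 (A k b : ℕ) (hk : k ≤ b - 1) (hb : 1 ≤ b) :
    A + k + 1 = A + b - (b - 1 - k) := by omega


/-- Every equivalence class `δ` of `≡ᵘₐ` on `D_{m,n}` containing a subset not contained in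
`{1,...,n-a}` has cardinality `C(⌊a/u⌋ - s + b, b)` for some `0 < b ≤ m`, `0 ≤ s ≤ b`. -/
theorem card_equiv_class_eq_choose (m n a u : ℕ) (hm : m ≤ n) (ha : a ≤ n) (hu : 0 < u)
    (f₀ : Finset ℕ) (hf₀ : f₀ ∈ Dmn m n) (hnot : ¬ f₀ ⊆ Finset.Icc 1 (n - a)) :
    ∃ b s : ℕ, 0 < b ∧ b ≤ m ∧ s ≤ b ∧
      (@Finset.filter _ (fun f => EqvRel n a u f f₀) (Classical.decPred _) (Dmn m n)).card
        = Nat.choose (a / u + b - s) b := by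
  classical
  set T := n - a with hTdef
  have hTa : T + a = n := by omega
  rw [Dmn, Finset.mem_powersetCard] at hf₀
  obtain ⟨hf₀sub, hf₀card⟩ := hf₀
  set L : Finset ℕ := f₀ ∩ Finset.Icc 1 T with hLdef
  set G : Finset ℕ := f₀ \ Finset.Icc 1 T with hGdef
  set b := G.card with hbdef
  set g : List ℕ := G.sort (· ≤ ·) with hgdef
  have hGmem : ∀ x ∈ G, T + 1 ≤ x ∧ x ≤ T + a := by
    intro x hx
    rw [hGdef, Finset.mem_sdiff] at hx
    obtain ⟨hx1, hx2⟩ := hx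
    have h1 := hf₀sub hx1
    rw [Finset.mem_Icc] at h1
    rw [Finset.mem_Icc] at hx2
    omega
  have hLmem : ∀ x ∈ L, 1 ≤ x ∧ x ≤ T := by
    intro x hx
    rw [hLdef, Finset.mem_inter, Finset.mem_Icc] at hx
    omega
  have hLG : ∀ x ∈ L, ∀ y ∈ G, x < y := by
    intro x hx y hy
    have := hLmem x hx
    have := hGmem y hy
    omega
  have hf₀split : L ∪ G = f₀ := by
    rw [hLdef, hGdef, ← Finset.sup_eq_union, ← Finset.inf_eq_inter]
    exact sup_inf_sdiff f₀ _
  have hdisj : Disjoint L G := by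
    rw [Finset.disjoint_left]
    intro x hx hx'
    exact absurd rfl (hLG x hx x hx').ne
  have hcardLb : L.card + b = m := by
    rw [hbdef, ← Finset.card_union_of_disjoint hdisj, hf₀split, hf₀card]
  have hbpos : 0 < b := by
    rw [hbdef, Finset.card_pos]
    obtain ⟨x, hx1, hx2⟩ := Finset.not_subset.mp hnot
    exact ⟨x, Finset.mem_sdiff.mpr ⟨hx1, hx2⟩⟩
  have hbm : b ≤ m := by omega
  have hglen : g.length = b := by rw [hgdef, Finset.length_sort, hbdef]
  have hgne : g ≠ [] := by
    intro h
    rw [h] at hglen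
    simp at hglen
    omega
  have hgmem' : ∀ x ∈ g, T + 1 ≤ x ∧ x ≤ T + a := by
    intro x hx
    exact hGmem x ((Finset.mem_sort _).mp hx)
  have hsortf₀ : f₀.sort (· ≤ ·) = L.sort (· ≤ ·) ++ g := by
    rw [← hf₀split]
    exact sort_union_of_lt L G hLG
  -- Step A : reduce to counting high parts
  have stepA : (@Finset.filter _ (fun f => EqvRel n a u f f₀) (Classical.decPred _)
        (Dmn m n)).card
      = (Finset.filter (fun H => List.Forall₂ (Nat.ModEq u) (H.sort (· ≤ ·)) g)
          ((Finset.Icc (T+1) (T+a)).powersetCard b)).card := by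
    apply Finset.card_bij' (i := fun f _ => f \ Finset.Icc 1 T) (j := fun H _ => L ∪ H)
      ?hi ?hj ?left ?right
    case hi =>
      intro f hf
      rw [Finset.mem_filter, Dmn, Finset.mem_powersetCard] at hf
      obtain ⟨⟨hfsub, hfcard⟩, hint, hf2⟩ := hf
      have hfint : f ∩ Finset.Icc 1 T = L := hint
      have hfsplit : L ∪ (f \ Finset.Icc 1 T) = f := by
        rw [← hfint, ← Finset.sup_eq_union, ← Finset.inf_eq_inter]
        exact sup_inf_sdiff f _
      have hfGmem : ∀ x ∈ f \ Finset.Icc 1 T, T + 1 ≤ x ∧ x ≤ T + a := by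
        intro x hx
        rw [Finset.mem_sdiff] at hx
        obtain ⟨hx1, hx2⟩ := hx
        have h1 := hfsub hx1
        rw [Finset.mem_Icc] at h1
        rw [Finset.mem_Icc] at hx2
        omega
      have hfdisj : Disjoint L (f \ Finset.Icc 1 T) := by
        rw [Finset.disjoint_left]
        intro x hx hx'
        have := hLmem x hx
        have := hfGmem x hx'
        omega
      have hsortf : f.sort (· ≤ ·) = L.sort (· ≤ ·) ++ (f \ Finset.Icc 1 T).sort (· ≤ ·) := by
        conv_lhs => rw [← hfsplit]
        apply sort_union_of_lt
        intro x hx y hy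
        have := hLmem x hx
        have := hfGmem y hy
        omega
      have hcardf : L.card + (f \ Finset.Icc 1 T).card = m := by
        rw [← Finset.card_union_of_disjoint hfdisj, hfsplit, hfcard]
      show f \ Finset.Icc 1 T ∈ _
      rw [Finset.mem_filter, Finset.mem_powersetCard]
      refine ⟨⟨?_, by omega⟩, ?_⟩
      · intro x hx
        exact Finset.mem_Icc.mpr (hfGmem x hx)
      · show List.Forall₂ _ ((f \ Finset.Icc 1 T).sort (· ≤ ·)) g
        rw [hsortf, hsortf₀] at hf2
        have := List.forall₂_drop_append _ _ _ hf2
        rwa [List.drop_left] at this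
    case hj =>
      intro H hH
      rw [Finset.mem_filter, Finset.mem_powersetCard] at hH
      obtain ⟨⟨hHsub, hHcard⟩, hHf2⟩ := hH
      have hHmem : ∀ x ∈ H, T + 1 ≤ x ∧ x ≤ T + a := by
        intro x hx
        exact Finset.mem_Icc.mp (hHsub hx)
      have hLH : ∀ x ∈ L, ∀ y ∈ H, x < y := by
        intro x hx y hy
        have := hLmem x hx
        have := hHmem y hy
        omega
      have hdisjH : Disjoint L H := by
        rw [Finset.disjoint_left]
        intro x hx hx'
        exact absurd rfl (hLH x hx x hx').ne
      show L ∪ H ∈ _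
      rw [Finset.mem_filter, Dmn, Finset.mem_powersetCard]
      refine ⟨⟨?_, ?_⟩, ?_, ?_⟩
      · intro x hx
        rw [Finset.mem_union] at hx
        rw [Finset.mem_Icc]
        rcases hx with hx | hx
        · have := hLmem x hx
          omega
        · have := hHmem x hx
          omega
      · rw [Finset.card_union_of_disjoint hdisjH]
        omega
      · show (L ∪ H) ∩ Finset.Icc 1 T = f₀ ∩ Finset.Icc 1 T
        rw [Finset.union_inter_distrib_right]
        have e1 : L ∩ Finset.Icc 1 T = L := by
          apply Finset.inter_eq_left.mpr
          intro x hx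
          have := hLmem x hx
          rw [Finset.mem_Icc]
          omega
        have e2 : H ∩ Finset.Icc 1 T = ∅ := by
          rw [Finset.eq_empty_iff_forall_notMem]
          intro x hx
          rw [Finset.mem_inter, Finset.mem_Icc] at hx
          have := hHmem x hx.1
          omega
        rw [e1, e2, Finset.union_empty, hLdef]
      · show List.Forall₂ _ ((L ∪ H).sort (· ≤ ·)) (f₀.sort (· ≤ ·))
        rw [sort_union_of_lt L H hLH, hsortf₀]
        apply List.rel_append
        · exact List.forall₂_same.mpr (fun x _ => Nat.ModEq.refl x)
        · exact hHf2
    case left =>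
      intro f hf
      rw [Finset.mem_filter] at hf
      obtain ⟨_, hint, _⟩ := hf
      have hfint : f ∩ Finset.Icc 1 T = L := hint
      show L ∪ (f \ Finset.Icc 1 T) = f
      rw [← hfint, ← Finset.sup_eq_union, ← Finset.inf_eq_inter]
      exact sup_inf_sdiff f _
    case right =>
      intro H hH
      rw [Finset.mem_filter, Finset.mem_powersetCard] at hH
      obtain ⟨⟨hHsub, hHcard⟩, hHf2⟩ := hH
      show (L ∪ H) \ Finset.Icc 1 T = H
      rw [Finset.union_sdiff_distrib]
      have e1 : L \ Finset.Icc 1 T = ∅ := by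
        rw [Finset.sdiff_eq_empty_iff_subset]
        intro x hx
        have := hLmem x hx
        rw [Finset.mem_Icc]
        omega
      have e2 : H \ Finset.Icc 1 T = H := by
        rw [Finset.sdiff_eq_self_iff_disjoint, Finset.disjoint_left]
        intro x hx hx'
        rw [Finset.mem_Icc] at hx'
        have := Finset.mem_Icc.mp (hHsub hx)
        omega
      rw [e1, e2, Finset.empty_union]
  -- apply step B
  have hB := stepB T a u hu g ((Finset.sortedLT_sort G).pairwise) hgne hgmem' inferInstance
  rw [hglen] at hB
  set ρ : ℕ → ℕ := fun i => (g.getD i 0 - (T+1)) % u with hρdef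
  set l : ℕ := b - 1 with hldef
  -- arithmetic: express K as a/u + b - s
  have hρa : ρ l ≤ a - 1 ∧ 1 ≤ a := by
    have hlb : l < b := by omega
    have hmem2 : T + 1 ≤ g.getD l 0 ∧ g.getD l 0 ≤ T + a := by
      rw [List.getD_eq_getElem _ _ (by omega)]
      exact hgmem' _ (List.getElem_mem _)
    have h2 : ρ l ≤ g.getD l 0 - (T+1) := Nat.mod_le _ _
    constructor <;> omega
  have hρu : ρ l < u := Nat.mod_lt _ hu
  have hcl : casc ρ l ≤ l := casc_le_self ρ l
  have hdam := Nat.div_add_mod a u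
  have hamu : a % u < u := Nat.mod_lt _ hu
  by_cases hind : a % u ≤ ρ l
  · -- indicator = 1
    refine ⟨b, b - 1 - casc ρ l + 1, hbpos, hbm, by omega, ?_⟩
    have hua : u ≤ a := by
      by_contra h
      push_neg at h
      rw [Nat.mod_eq_of_lt h] at hind
      omega
    have hA1 : 1 ≤ a / u := (Nat.one_le_div_iff hu).mpr hua
    have hq : (a - 1 - ρ l) / u = a / u - 1 :=
      arith_div1 a u (ρ l) hu hua hind hρu hρa.1
    rw [stepA, hB, hq]
    congr 1
    exact arith_fin1 (a/u) (casc ρ l) b ((Nat.one_le_div_iff hu).mpr hua) (by omega) (by omega)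
  · -- indicator = 0
    refine ⟨b, b - 1 - casc ρ l, hbpos, hbm, by omega, ?_⟩
    have hq : (a - 1 - ρ l) / u = a / u :=
      arith_div2 a u (ρ l) hu hind hρu hρa.1
    rw [stepA, hB, hq]
    congr 1
    exact arith_fin2 (a/u) (casc ρ l) b (by omega) (by omega)
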